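/- If C = C₁ ⊕_r C₂ for some r ≥ 1, then with J = I₁∖I₂ and J̄ = I₂∖I₁ we have dim(C|_J) + dim(C|_{J̄}) − dim(C) = r, and moreover |J| ≥ r and |J̄| ≥ r. -/

import Mathlib

open Module

/-- The submodule of functions in `α → F` vanishing on `s`. -/
def vanishOn (F : Type*) [Field F] {α : Type*} (s : Set α) : Submodule F (α → F) where
  carrier := {x | ∀ a ∈ s, x a = 0}
  add_mem' := by
    intro x y hx hy a ha
    show x a + y a = 0
    rw [hx a ha, hy a ha, add_zero]
  zero_mem' := fun a _ => rfl
  smul_mem' := by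
    intro c x hx a ha
    show c • x a = 0
    rw [hx a ha, smul_zero]

variable (F : Type*) [Field F] (J K Jb : Type*)

/-- The `⋆` operation: indices of the first code are `J ⊕ K`, of the second `K ⊕ Jb`,
where `K` plays the role of the common index set `I₁ ∩ I₂`.  On `J` the result agrees with
`x`, on `Jb` with `y`, and on the common part `K` it is `x − y`. -/
noncomputable def starMap :
    ((J ⊕ K → F) × (K ⊕ Jb → F)) →ₗ[F] (J ⊕ K ⊕ Jb → F) where
  toFun p := Sum.elim (fun j => p.1 (Sum.inl j))
    (Sum.elim (fun k => p.1 (Sum.inr k) - p.2 (Sum.inl k)) (fun j => p.2 (Sum.inr j)))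
  map_add' p q := by
    funext i
    rcases i with j | k | j <;> simp <;> ring
  map_smul' c p := by
    funext i
    rcases i with j | k | j <;> simp <;> ring

variable {F J K Jb}

/-- The code `C₁ ⋆ C₂ = {x ⋆ y : x ∈ C₁, y ∈ C₂}`. -/
noncomputable def starCode (C₁ : Submodule F (J ⊕ K → F)) (C₂ : Submodule F (K ⊕ Jb → F)) :
    Submodule F (J ⊕ K ⊕ Jb → F) :=
  (C₁.prod C₂).map (starMap F J K Jb)

/-- The projection `C₁^{(p)} = C₁|_{I₁ ∩ I₂}` of the first code onto the common part `K`. -/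
noncomputable def projK₁ (C₁ : Submodule F (J ⊕ K → F)) : Submodule F (K → F) :=
  C₁.map (LinearMap.funLeft F F (Sum.inr : K → J ⊕ K))

/-- The projection `C₂^{(p)} = C₂|_{I₁ ∩ I₂}` of the second code onto the common part `K`. -/
noncomputable def projK₂ (C₂ : Submodule F (K ⊕ Jb → F)) : Submodule F (K → F) :=
  C₂.map (LinearMap.funLeft F F (Sum.inl : K → K ⊕ Jb))

/-- The cross-section `C₁^{(s)} = (C₁)_{I₁ ∩ I₂}` on the common part `K`. -/
noncomputable def crossK₁ (C₁ : Submodule F (J ⊕ K → F)) : Submodule F (K → F) :=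
  (C₁ ⊓ vanishOn F (Set.range (Sum.inl : J → J ⊕ K))).map
    (LinearMap.funLeft F F (Sum.inr : K → J ⊕ K))

/-- The cross-section `C₂^{(s)} = (C₂)_{I₁ ∩ I₂}` on the common part `K`. -/
noncomputable def crossK₂ (C₂ : Submodule F (K ⊕ Jb → F)) : Submodule F (K → F) :=
  (C₂ ⊓ vanishOn F (Set.range (Sum.inr : Jb → K ⊕ Jb))).map
    (LinearMap.funLeft F F (Sum.inl : K → K ⊕ Jb))

/-- `S(C₁, C₂)`: the cross-section of `C₁ ⋆ C₂` on the symmetric difference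
`I₁ Δ I₂ = J ⊕ Jb`. -/
noncomputable def sCode (C₁ : Submodule F (J ⊕ K → F)) (C₂ : Submodule F (K ⊕ Jb → F)) :
    Submodule F (J ⊕ Jb → F) :=
  (starCode C₁ C₂ ⊓ vanishOn F (Set.range (fun k : K => (Sum.inr (Sum.inl k) : J ⊕ K ⊕ Jb)))).map
    (LinearMap.funLeft F F (Sum.elim Sum.inl (Sum.inr ∘ Sum.inr) : J ⊕ Jb → J ⊕ K ⊕ Jb))

theorem mem_vanishOn' {α : Type*} {s : Set α} {x : α → F} :
    x ∈ vanishOn F s ↔ ∀ a ∈ s, x a = 0 := Iff.rfl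

/-- The map `(x, y) ↦ x|_K − y|_K`. -/
noncomputable def deltaMap (F J K Jb : Type*) [Field F] :
    ((J ⊕ K → F) × (K ⊕ Jb → F)) →ₗ[F] (K → F) :=
  (LinearMap.funLeft F F (Sum.inr : K → J ⊕ K)).comp (LinearMap.fst F _ _) -
    (LinearMap.funLeft F F (Sum.inl : K → K ⊕ Jb)).comp (LinearMap.snd F _ _)

theorem deltaMap_apply (p : (J ⊕ K → F) × (K ⊕ Jb → F)) (k : K) :
    deltaMap F J K Jb p k = p.1 (Sum.inr k) - p.2 (Sum.inl k) := rfl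

/-- The map `(x, y) ↦ (x|_J, y|_Jb)`. -/
noncomputable def psiMap (F J K Jb : Type*) [Field F] :
    ((J ⊕ K → F) × (K ⊕ Jb → F)) →ₗ[F] (J ⊕ Jb → F) where
  toFun p := Sum.elim (fun j => p.1 (Sum.inl j)) (fun j => p.2 (Sum.inr j))
  map_add' p q := by funext i; rcases i with j | j <;> simp
  map_smul' c p := by funext i; rcases i with j | j <;> simp

theorem psiMap_apply_inl (p : (J ⊕ K → F) × (K ⊕ Jb → F)) (j : J) :
    psiMap F J K Jb p (Sum.inl j) = p.1 (Sum.inl j) := rfl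

theorem psiMap_apply_inr (p : (J ⊕ K → F) × (K ⊕ Jb → F)) (j : Jb) :
    psiMap F J K Jb p (Sum.inr j) = p.2 (Sum.inr j) := rfl

/-- A submodule product is linearly equivalent to the product of the submodules. -/
noncomputable def prodSubEquiv {M N : Type*} [AddCommGroup M] [Module F M]
    [AddCommGroup N] [Module F N] (p : Submodule F M) (q : Submodule F N) :
    ↥(p.prod q) ≃ₗ[F] ↥p × ↥q where
  toFun x := (⟨x.1.1, x.2.1⟩, ⟨x.1.2, x.2.2⟩)
  map_add' x y := rfl
  map_smul' c x := rfl
  invFun x := ⟨(x.1.1, x.2.1), ⟨x.1.2, x.2.2⟩⟩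
  left_inv x := rfl
  right_inv x := rfl

/-- If `f` is injective on `p`, then `p.map f` has the same finrank as `p`. -/
theorem finrank_map_eq_of_inj {M N : Type*} [AddCommGroup M] [Module F M]
    [AddCommGroup N] [Module F N] [FiniteDimensional F M]
    (p : Submodule F M) (f : M →ₗ[F] N) (h : ∀ x ∈ p, f x = 0 → x = 0) :
    finrank F ↥(p.map f) = finrank F ↥p := by
  have h1 := LinearMap.finrank_range_add_finrank_ker (f.comp p.subtype)
  have hker : LinearMap.ker (f.comp p.subtype) = ⊥ := by
    ext ⟨x, hx⟩
    simp only [LinearMap.mem_ker, LinearMap.comp_apply, Submodule.subtype_apply,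
      Submodule.mem_bot, Submodule.mk_eq_zero]
    exact ⟨fun hz => h x hx hz, fun hz => by rw [hz, map_zero]⟩
  have hrange : LinearMap.range (f.comp p.subtype) = p.map f := by
    rw [LinearMap.range_comp, Submodule.range_subtype]
  rw [hrange, hker, finrank_bot, add_zero] at h1
  exact h1

set_option maxHeartbeats 1000000 in
set_option synthInstance.maxHeartbeats 400000 in
/-- if `C = C₁ ⊕_r C₂` with `J = I₁ ∖ I₂`, `J̄ = I₂ ∖ I₁`, then
`dim C|_J + dim C|_{J̄} − dim C = r`, and moreover `|J| ≥ r` and `|J̄| ≥ r`. -/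
theorem rSum_state_dim [Fintype J] [Fintype K] [Fintype Jb] [Fintype F]
    (r : ℕ) (hr : 1 ≤ r)
    (hK : Fintype.card K = (Fintype.card F ^ r - 1) / (Fintype.card F - 1))
    (D : Fin r → K → F)
    (hDrows : LinearIndependent F D)
    (hDcols : ∀ k₁ k₂ : K, k₁ ≠ k₂ →
      LinearIndependent F ![fun i => D i k₁, fun i => D i k₂])
    (C₁ : Submodule F (J ⊕ K → F)) (C₂ : Submodule F (K ⊕ Jb → F))
    (hp₁ : projK₁ C₁ = Submodule.span F (Set.range D))
    (hp₂ : projK₂ C₂ = Submodule.span F (Set.range D))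
    (hs₁ : crossK₁ C₁ = ⊥) (hs₂ : crossK₂ C₂ = ⊥) :
    finrank F ↥((sCode C₁ C₂).map (LinearMap.funLeft F F (Sum.inl : J → J ⊕ Jb))) +
        finrank F ↥((sCode C₁ C₂).map (LinearMap.funLeft F F (Sum.inr : Jb → J ⊕ Jb))) =
        finrank F ↥(sCode C₁ C₂) + r ∧
      r ≤ Fintype.card J ∧ r ≤ Fintype.card Jb := by
  classical
  set W : Submodule F ((J ⊕ K → F) × (K ⊕ Jb → F)) :=
    (C₁.prod C₂) ⊓ LinearMap.ker (deltaMap F J K Jb) with hW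
  -- injectivity of the projections on C₁ and C₂
  have hinj₁ : ∀ x ∈ C₁, LinearMap.funLeft F F (Sum.inl : J → J ⊕ K) x = 0 → x = 0 := by
    intro x hx hz
    have hmem : x ∈ C₁ ⊓ vanishOn F (Set.range (Sum.inl : J → J ⊕ K)) := by
      refine ⟨hx, ?_⟩
      rintro a ⟨j, rfl⟩
      exact congrFun hz j
    have hcr : LinearMap.funLeft F F (Sum.inr : K → J ⊕ K) x ∈ crossK₁ C₁ :=
      Submodule.mem_map.mpr ⟨x, hmem, rfl⟩
    rw [hs₁, Submodule.mem_bot] at hcr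
    funext i
    rcases i with j | k
    · exact congrFun hz j
    · exact congrFun hcr k
  have hinj₂ : ∀ y ∈ C₂, LinearMap.funLeft F F (Sum.inr : Jb → K ⊕ Jb) y = 0 → y = 0 := by
    intro y hy hz
    have hmem : y ∈ C₂ ⊓ vanishOn F (Set.range (Sum.inr : Jb → K ⊕ Jb)) := by
      refine ⟨hy, ?_⟩
      rintro a ⟨j, rfl⟩
      exact congrFun hz j
    have hcr : LinearMap.funLeft F F (Sum.inl : K → K ⊕ Jb) y ∈ crossK₂ C₂ :=
      Submodule.mem_map.mpr ⟨y, hmem, rfl⟩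
    rw [hs₂, Submodule.mem_bot] at hcr
    funext i
    rcases i with k | j
    · exact congrFun hcr k
    · exact congrFun hz j
  -- membership characterization of `sCode`
  have hS : ∀ z : J ⊕ Jb → F, z ∈ sCode C₁ C₂ ↔
      ∃ x y, x ∈ C₁ ∧ y ∈ C₂ ∧ (∀ k, x (Sum.inr k) = y (Sum.inl k)) ∧
        z = psiMap F J K Jb (x, y) := by
    intro z
    constructor
    · rintro ⟨w, ⟨hw1, hw2⟩, rfl⟩
      rcases hw1 with ⟨⟨x, y⟩, hxy, rfl⟩
      rcases Submodule.mem_prod.mp hxy with ⟨hx, hy⟩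
      refine ⟨x, y, hx, hy, ?_, ?_⟩
      · intro k
        have h0 := hw2 _ ⟨k, rfl⟩
        simpa [starMap, sub_eq_zero] using h0
      · funext i
        rcases i with j | j <;>
          simp [starMap, psiMap, LinearMap.funLeft_apply]
    · rintro ⟨x, y, hx, hy, hk, rfl⟩
      refine ⟨starMap F J K Jb (x, y),
        ⟨⟨(x, y), Submodule.mem_prod.mpr ⟨hx, hy⟩, rfl⟩, ?_⟩, ?_⟩
      · rintro a ⟨k, rfl⟩
        simp [starMap, hk k]
      · funext i
        rcases i with j | j <;>
          simp [starMap, psiMap, LinearMap.funLeft_apply]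
    -- projection equalities
  have hJ : (sCode C₁ C₂).map (LinearMap.funLeft F F (Sum.inl : J → J ⊕ Jb)) =
      C₁.map (LinearMap.funLeft F F (Sum.inl : J → J ⊕ K)) := by
    ext u
    simp only [Submodule.mem_map]
    constructor
    · rintro ⟨z, hz, rfl⟩
      rcases (hS z).mp hz with ⟨x, y, hx, hy, hk, rfl⟩
      refine ⟨x, hx, ?_⟩
      funext j
      simp [psiMap, LinearMap.funLeft_apply]
    · rintro ⟨x, hx, rfl⟩
      have hx' : LinearMap.funLeft F F (Sum.inr : K → J ⊕ K) x ∈ projK₂ C₂ := by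
        rw [hp₂, ← hp₁]
        exact Submodule.mem_map.mpr ⟨x, hx, rfl⟩
      rcases Submodule.mem_map.mp hx' with ⟨y, hy, hyx⟩
      have hk : ∀ k, x (Sum.inr k) = y (Sum.inl k) := fun k => (congrFun hyx k).symm
      refine ⟨psiMap F J K Jb (x, y), (hS _).mpr ⟨x, y, hx, hy, hk, rfl⟩, ?_⟩
      funext j
      simp [psiMap, LinearMap.funLeft_apply]
  have hJb : (sCode C₁ C₂).map (LinearMap.funLeft F F (Sum.inr : Jb → J ⊕ Jb)) =
      C₂.map (LinearMap.funLeft F F (Sum.inr : Jb → K ⊕ Jb)) := by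
    ext u
    simp only [Submodule.mem_map]
    constructor
    · rintro ⟨z, hz, rfl⟩
      rcases (hS z).mp hz with ⟨x, y, hx, hy, hk, rfl⟩
      refine ⟨y, hy, ?_⟩
      funext j
      simp [psiMap, LinearMap.funLeft_apply]
    · rintro ⟨y, hy, rfl⟩
      have hy' : LinearMap.funLeft F F (Sum.inl : K → K ⊕ Jb) y ∈ projK₁ C₁ := by
        rw [hp₁, ← hp₂]
        exact Submodule.mem_map.mpr ⟨y, hy, rfl⟩
      rcases Submodule.mem_map.mp hy' with ⟨x, hx, hxy⟩
      have hk : ∀ k, x (Sum.inr k) = y (Sum.inl k) := fun k => congrFun hxy k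
      refine ⟨psiMap F J K Jb (x, y), (hS _).mpr ⟨x, y, hx, hy, hk, rfl⟩, ?_⟩
      funext j
      simp [psiMap, LinearMap.funLeft_apply]
  -- sCode as image of W
  have hSW : sCode C₁ C₂ = W.map (psiMap F J K Jb) := by
    ext z
    rw [hS]
    simp only [Submodule.mem_map]
    constructor
    · rintro ⟨x, y, hx, hy, hk, rfl⟩
      refine ⟨(x, y), ⟨Submodule.mem_prod.mpr ⟨hx, hy⟩, ?_⟩, rfl⟩
      show deltaMap F J K Jb (x, y) = 0
      funext k
      rw [deltaMap_apply]
      simp [hk k]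
    · rintro ⟨⟨x, y⟩, ⟨hxy, hker⟩, rfl⟩
      rcases Submodule.mem_prod.mp hxy with ⟨hx, hy⟩
      refine ⟨x, y, hx, hy, fun k => ?_, rfl⟩
      have h0 := congrFun (LinearMap.mem_ker.mp hker) k
      rw [deltaMap_apply] at h0
      simp only [Pi.zero_apply] at h0
      exact sub_eq_zero.mp h0
  -- psiMap is injective on W
  have hpsiinj : ∀ p ∈ W, psiMap F J K Jb p = 0 → p = 0 := by
    rintro ⟨x, y⟩ ⟨hxy, hker⟩ hz
    rcases Submodule.mem_prod.mp hxy with ⟨hx, hy⟩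
    have hxl : LinearMap.funLeft F F (Sum.inl : J → J ⊕ K) x = 0 := by
      funext j
      exact congrFun hz (Sum.inl j)
    have hx0 : x = 0 := hinj₁ x hx hxl
    have hy0 : y = 0 := by
      funext i
      simp only [Pi.zero_apply]
      rcases i with k | j
      · have h0 := congrFun (LinearMap.mem_ker.mp hker) k
        rw [deltaMap_apply] at h0
        rw [hx0] at h0
        simpa using h0
      · exact congrFun hz (Sum.inr j)
    simp [hx0, hy0]
  -- rank computations
  have hfin₁ : finrank F ↥(C₁.map (LinearMap.funLeft F F (Sum.inl : J → J ⊕ K))) =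
      finrank F ↥C₁ := finrank_map_eq_of_inj C₁ _ hinj₁
  have hfin₂ : finrank F ↥(C₂.map (LinearMap.funLeft F F (Sum.inr : Jb → K ⊕ Jb))) =
      finrank F ↥C₂ := finrank_map_eq_of_inj C₂ _ hinj₂
  have hfinS : finrank F ↥(sCode C₁ C₂) = finrank F ↥W := by
    rw [hSW]
    exact finrank_map_eq_of_inj W _ hpsiinj
  -- rank-nullity for deltaMap restricted to C₁.prod C₂
  set g : ↥(C₁.prod C₂) →ₗ[F] (K → F) :=
    (deltaMap F J K Jb).comp (C₁.prod C₂).subtype with hg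
  have hrangeg : LinearMap.range g = Submodule.span F (Set.range D) := by
    apply le_antisymm
    · rintro _ ⟨⟨⟨x, y⟩, hxy⟩, rfl⟩
      rcases Submodule.mem_prod.mp hxy with ⟨hx, hy⟩
      have h1 : LinearMap.funLeft F F (Sum.inr : K → J ⊕ K) x ∈
          Submodule.span F (Set.range D) := by
        rw [← hp₁]; exact Submodule.mem_map.mpr ⟨x, hx, rfl⟩
      have h2 : LinearMap.funLeft F F (Sum.inl : K → K ⊕ Jb) y ∈
          Submodule.span F (Set.range D) := by
        rw [← hp₂]; exact Submodule.mem_map.mpr ⟨y, hy, rfl⟩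
      have heq : g ⟨(x, y), hxy⟩ = LinearMap.funLeft F F (Sum.inr : K → J ⊕ K) x -
          LinearMap.funLeft F F (Sum.inl : K → K ⊕ Jb) y := rfl
      rw [heq]
      exact sub_mem h1 h2
    · rw [← hp₁]
      rintro _ ⟨x, hx, rfl⟩
      refine ⟨⟨(x, 0), Submodule.mem_prod.mpr ⟨hx, Submodule.zero_mem _⟩⟩, ?_⟩
      funext k
      show x (Sum.inr k) - (0 : K ⊕ Jb → F) (Sum.inl k) = x (Sum.inr k)
      simp
  have hkerg : finrank F ↥W = finrank F ↥(LinearMap.ker g) := by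
    have hWmap : W = (LinearMap.ker g).map (C₁.prod C₂).subtype := by
      rw [hg, LinearMap.ker_comp, Submodule.map_comap_subtype, hW]
    rw [hWmap]
    exact (Submodule.equivMapOfInjective _ (Submodule.injective_subtype _)
      (LinearMap.ker g)).symm.finrank_eq
  have hrn := LinearMap.finrank_range_add_finrank_ker g
  have hprod : finrank F ↥(C₁.prod C₂) = finrank F ↥C₁ + finrank F ↥C₂ := by
    rw [(prodSubEquiv C₁ C₂).finrank_eq]
    exact Module.finrank_prod
  have hspan : finrank F ↥(Submodule.span F (Set.range D)) = r := by
    rw [finrank_span_eq_card hDrows, Fintype.card_fin]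
  rw [hrangeg, hspan, hprod] at hrn
  -- r ≤ card J and r ≤ card Jb
  have hrC₁ : r ≤ finrank F ↥C₁ := by
    have h1 : finrank F ↥(projK₁ C₁) ≤ finrank F ↥C₁ := Submodule.finrank_map_le _ _
    rwa [hp₁, hspan] at h1
  have hrC₂ : r ≤ finrank F ↥C₂ := by
    have h1 : finrank F ↥(projK₂ C₂) ≤ finrank F ↥C₂ := Submodule.finrank_map_le _ _
    rwa [hp₂, hspan] at h1
  have hcardJ : finrank F ↥C₁ ≤ Fintype.card J := by
    rw [← hfin₁]
    have := Submodule.finrank_le (C₁.map (LinearMap.funLeft F F (Sum.inl : J → J ⊕ K)))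
    rwa [Module.finrank_pi] at this
  have hcardJb : finrank F ↥C₂ ≤ Fintype.card Jb := by
    rw [← hfin₂]
    have := Submodule.finrank_le (C₂.map (LinearMap.funLeft F F (Sum.inr : Jb → K ⊕ Jb)))
    rwa [Module.finrank_pi] at this
  refine ⟨?_, le_trans hrC₁ hcardJ, le_trans hrC₂ hcardJb⟩
  rw [hJ, hJb, hfin₁, hfin₂, hfinS, hkerg]
  omega
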